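/- Let X be an HLUR Banach space and let Y be a proximinal closed subspace of X. Then the quotient space X/Y is HLUR. -/
import Mathlib


open Metric Filter Topology NormedSpace

noncomputable section

/-- The face `S(X, f, 0) = {y ∈ B_X : f(y) = 1}` determined by a functional `f`. -/
def face (X : Type*) [NormedAddCommGroup X] [NormedSpace ℝ X] (f : X →L[ℝ] ℝ) : Set X :=
  {y | ‖y‖ ≤ 1 ∧ f y = 1}

/-- Property (HS). -/
def HSProp (X : Type*) [NormedAddCommGroup X] [NormedSpace ℝ X] : Prop :=
  ∀ f : X →L[ℝ] ℝ, ‖f‖ = 1 → (face X f).Nonempty →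
    ∀ xs : ℕ → X, (∀ n, ‖xs n‖ ≤ 1) →
      Tendsto (fun n => f (xs n)) atTop (𝓝 1) →
      Tendsto (fun n => infDist (xs n) (face X f)) atTop (𝓝 0)

/-- Property (HLUR). -/
def HLUR (X : Type*) [NormedAddCommGroup X] [NormedSpace ℝ X] : Prop :=
  ∀ x : X, ‖x‖ = 1 → ∀ xs : ℕ → X, (∀ n, ‖xs n‖ = 1) →
    Tendsto (fun n => ‖xs n + x‖) atTop (𝓝 2) →
    ∀ f : X →L[ℝ] ℝ, ‖f‖ = 1 → f x = 1 →
      Tendsto (fun n => infDist (xs n) (face X f)) atTop (𝓝 0)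

/-- Local uniform rotundity. -/
def LUR (X : Type*) [NormedAddCommGroup X] [NormedSpace ℝ X] : Prop :=
  ∀ x : X, ‖x‖ = 1 → ∀ xs : ℕ → X, (∀ n, ‖xs n‖ = 1) →
    Tendsto (fun n => ‖xs n + x‖) atTop (𝓝 2) → Tendsto xs atTop (𝓝 x)

/-- Compact local uniform rotundity. -/
def CLUR (X : Type*) [NormedAddCommGroup X] [NormedSpace ℝ X] : Prop :=
  ∀ x : X, ‖x‖ = 1 → ∀ xs : ℕ → X, (∀ n, ‖xs n‖ = 1) →
    Tendsto (fun n => ‖xs n + x‖) atTop (𝓝 2) →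
    ∃ φ : ℕ → ℕ, StrictMono φ ∧ ∃ z : X, Tendsto (xs ∘ φ) atTop (𝓝 z)

/-- Local U-convexity. -/
def LocallyUConvex (X : Type*) [NormedAddCommGroup X] [NormedSpace ℝ X] : Prop :=
  ∀ x : X, ‖x‖ = 1 → ∀ xs : ℕ → X, (∀ n, ‖xs n‖ = 1) →
    Tendsto (fun n => ‖xs n + x‖) atTop (𝓝 2) →
    ∃ f : X →L[ℝ] ℝ, ‖f‖ = 1 ∧ f x = 1 ∧ Tendsto (fun n => f (xs n)) atTop (𝓝 1)

/-- Strong local U-convexity. -/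
def StronglyLocallyUConvex (X : Type*) [NormedAddCommGroup X] [NormedSpace ℝ X] : Prop :=
  ∀ x : X, ‖x‖ = 1 → ∀ xs : ℕ → X, (∀ n, ‖xs n‖ = 1) →
    Tendsto (fun n => ‖xs n + x‖) atTop (𝓝 2) →
    ∀ f : X →L[ℝ] ℝ, ‖f‖ = 1 → f x = 1 → Tendsto (fun n => f (xs n)) atTop (𝓝 1)

/-- Rotundity (strict convexity): every face has at most one element. -/
def Rotund (X : Type*) [NormedAddCommGroup X] [NormedSpace ℝ X] : Prop :=
  ∀ f : X →L[ℝ] ℝ, ‖f‖ = 1 → (face X f).Subsingleton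

/-- Near strict convexity: every face is norm-compact. -/
def NSC (X : Type*) [NormedAddCommGroup X] [NormedSpace ℝ X] : Prop :=
  ∀ f : X →L[ℝ] ℝ, ‖f‖ = 1 → IsCompact (face X f)

/-- Kadets-Klee property. -/
def KadetsKlee (X : Type*) [NormedAddCommGroup X] [NormedSpace ℝ X] : Prop :=
  ∀ (xs : ℕ → X) (x : X),
    (∀ f : X →L[ℝ] ℝ, Tendsto (fun n => f (xs n)) atTop (𝓝 (f x))) →
    Tendsto (fun n => ‖xs n‖) atTop (𝓝 ‖x‖) → Tendsto xs atTop (𝓝 x)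

/-- Alternatively convex or smooth. -/
def ACS (X : Type*) [NormedAddCommGroup X] [NormedSpace ℝ X] : Prop :=
  ∀ x y : X, ‖x‖ = 1 → ‖y‖ = 1 → ∀ f : X →L[ℝ] ℝ, ‖f‖ = 1 →
    ‖x + y‖ = 2 → f x = 1 → f y = 1

/-- Smoothness: each unit vector has a unique norming functional. -/
def SmoothSpace (X : Type*) [NormedAddCommGroup X] [NormedSpace ℝ X] : Prop :=
  ∀ x : X, ‖x‖ = 1 → ∃! f : X →L[ℝ] ℝ, ‖f‖ = 1 ∧ f x = 1

/-- Reflexivity of a normed space. -/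
def ReflexiveSpace (X : Type*) [NormedAddCommGroup X] [NormedSpace ℝ X] : Prop :=
  Function.Surjective (inclusionInDoubleDual ℝ X)

/-- Strong rotundity: reflexive, rotund and Kadets-Klee. -/
def StronglyRotund (X : Type*) [NormedAddCommGroup X] [NormedSpace ℝ X] : Prop :=
  ReflexiveSpace X ∧ Rotund X ∧ KadetsKlee X

lemma norm_quot_mk_eq (X : Type*) [NormedAddCommGroup X] [NormedSpace ℝ X]
    (Y : Submodule ℝ X) [IsClosed (Y : Set X)] (m : X) :
    ‖(Submodule.Quotient.mk m : X ⧸ Y)‖ = infDist m (Y : Set X) :=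
  QuotientAddGroup.norm_mk m

lemma norm_quot_mk_le' (X : Type*) [NormedAddCommGroup X] [NormedSpace ℝ X]
    (Y : Submodule ℝ X) [IsClosed (Y : Set X)] (m : X) :
    ‖(Submodule.Quotient.mk m : X ⧸ Y)‖ ≤ ‖m‖ :=
  Submodule.Quotient.norm_mk_le Y m

lemma le_infDist'' {α : Type*} [PseudoMetricSpace α] {s : Set α} (hs : s.Nonempty) {x : α}
    {T : ℝ} (h : ∀ y ∈ s, T ≤ dist x y) : T ≤ Metric.infDist x s := by
  by_contra hlt
  push_neg at hlt
  obtain ⟨y, hy, hd⟩ := (Metric.infDist_lt_iff hs).mp hlt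
  exact absurd hd (not_lt.mpr (h y hy))

noncomputable def quotCLM {X : Type*} [NormedAddCommGroup X] [NormedSpace ℝ X]
    (Y : Submodule ℝ X) : X →L[ℝ] (X ⧸ Y) :=
  Y.mkQ.mkContinuous 1 (fun x => by simpa using Submodule.Quotient.norm_mk_le Y x)

@[simp] lemma quotCLM_apply {X : Type*} [NormedAddCommGroup X] [NormedSpace ℝ X]
    (Y : Submodule ℝ X) (x : X) : quotCLM Y x = Submodule.Quotient.mk x := rfl

theorem hlur_quotient (X : Type*) [NormedAddCommGroup X] [NormedSpace ℝ X]
    [CompleteSpace X] (Y : Submodule ℝ X) [IsClosed (Y : Set X)]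
    (hprox : ∀ x : X, ∃ y ∈ Y, ‖x - y‖ = infDist x (Y : Set X))
    (hX : HLUR X) : HLUR (X ⧸ Y) := by
  intro xb hxb xsb hxsb hadd f hf hfx
  have hlift : ∀ v : X ⧸ Y, ∃ w : X, (Submodule.Quotient.mk w : X ⧸ Y) = v ∧ ‖w‖ = ‖v‖ := by
    intro v
    obtain ⟨z, hz⟩ := Submodule.Quotient.mk_surjective Y v
    obtain ⟨y, hyY, hy⟩ := hprox z
    refine ⟨z - y, ?_, ?_⟩
    · rw [Submodule.Quotient.mk_sub, (Submodule.Quotient.mk_eq_zero Y).mpr hyY, sub_zero, hz]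
    · rw [hy, ← hz]
      exact (norm_quot_mk_eq X Y z).symm
  obtain ⟨x, hQx, hxnorm⟩ := hlift xb
  rw [hxb] at hxnorm
  choose xs hQxs hxs using fun n => hlift (xsb n)
  have hxs1 : ∀ n, ‖xs n‖ = 1 := fun n => by rw [hxs n, hxsb n]
  -- norms of sums tend to 2
  have hadd2 : Tendsto (fun n => ‖xs n + x‖) atTop (𝓝 2) := by
    refine tendsto_of_tendsto_of_tendsto_of_le_of_le hadd tendsto_const_nhds ?_ ?_
    · intro n
      have : (Submodule.Quotient.mk (xs n + x) : X ⧸ Y) = xsb n + xb := by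
        rw [Submodule.Quotient.mk_add, hQxs n, hQx]
      calc ‖xsb n + xb‖ = ‖(Submodule.Quotient.mk (xs n + x) : X ⧸ Y)‖ := by rw [this]
        _ ≤ ‖xs n + x‖ := norm_quot_mk_le' X Y _
    · intro n
      calc ‖xs n + x‖ ≤ ‖xs n‖ + ‖x‖ := norm_add_le _ _
        _ = 2 := by rw [hxs1 n, hxnorm]; norm_num
  -- the composed functional
  set g : X →L[ℝ] ℝ := f.comp (quotCLM Y) with hg
  have hgapp : ∀ v : X, g v = f (Submodule.Quotient.mk v) := fun v => rfl
  have hgx : g x = 1 := by rw [hgapp, hQx, hfx]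
  have hgnorm : ‖g‖ = 1 := by
    refine le_antisymm (ContinuousLinearMap.opNorm_le_bound _ zero_le_one fun v => ?_) ?_
    · calc ‖g v‖ ≤ ‖f‖ * ‖(Submodule.Quotient.mk v : X ⧸ Y)‖ := f.le_opNorm _
        _ ≤ 1 * ‖v‖ := by
            rw [hf]
            exact mul_le_mul_of_nonneg_left (norm_quot_mk_le' X Y v) zero_le_one
    · have := g.le_opNorm x
      rw [hgx, hxnorm, mul_one] at this
      simpa using this.trans_eq' (by norm_num)
  have hmain := hX x hxnorm xs hxs1 hadd2 g hgnorm hgx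
  -- x is in the face of g
  have hxface : x ∈ face X g := ⟨le_of_eq hxnorm, hgx⟩
  have hmap : ∀ w ∈ face X g, (Submodule.Quotient.mk w : X ⧸ Y) ∈ face (X ⧸ Y) f := by
    intro w hw
    exact ⟨(norm_quot_mk_le' X Y w).trans hw.1, by rw [← hgapp]; exact hw.2⟩
  refine squeeze_zero (fun n => infDist_nonneg) (fun n => ?_) hmain
  refine le_infDist'' ⟨x, hxface⟩ fun w hw => ?_
  calc infDist (xsb n) (face (X ⧸ Y) f) ≤ dist (xsb n) (Submodule.Quotient.mk w) :=
        infDist_le_dist_of_mem (hmap w hw)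
    _ ≤ dist (xs n) w := by
        rw [dist_eq_norm, dist_eq_norm, ← hQxs n, ← Submodule.Quotient.mk_sub]
        exact norm_quot_mk_le' X Y _
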